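/- Let A be a unital C*-algebra with unitary group U(A), s a fixed nonzero complex number with |s| < 1, r > 2 a real number, and θ ≥ 0. Suppose f : A³ → A satisfies f(x, 0, a) = f(0, z, a) = f(x, z, 0) = 0 for all x, z, a ∈ A and, for all λ, μ, η ∈ T¹ and all x, y, z, w, a, b ∈ A, ‖2f(λ(x+y)/2, μ(z−w), η(a+b)) + 2f(λ(x−y)/2, μ(z+w), η(a−b)) − λμη(2f(x,z,a) − 2f(x,w,b) + 2f(y,z,b) − 2f(y,w,a))‖ ≤ ‖s · D₁f(x, y, z, w, a, b)‖ + θ(‖x‖^r + ‖y‖^r)(‖z‖^r + ‖w‖^r)(‖a‖^r + ‖b‖^r). Then there exists a unique ℂ-trilinear mapping D : A³ → A such that ‖f(x, z, a) − D(x, z, a)‖ ≤ (2^r θ/(2(2^r − 2))) ‖x‖^r ‖z‖^r ‖a‖^r for all x, z, a ∈ A. If, in addition, f satisfies ‖f(x_{σ(1)}, x_{σ(2)}, x_{σ(3)}) − f(x₁, x₂, x₃)‖ ≤ θ ‖x₁‖^r ‖x₂‖^r ‖x₃‖^r for all x₁, x₂, x₃ ∈ A and every permutation (σ(1), σ(2),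 σ(3)) of (1,2,3), and ‖f(uy, z, a) − f(u, z, a)y − u f(y, z, a)‖ ≤ θ(1 + ‖y‖^r)‖z‖^r ‖a‖^r for all u ∈ U(A) and all y, z, a ∈ A, then D is a permuting triderivation. -/

import Mathlib

set_option maxHeartbeats 1000000

open Filter Topology

private lemma circle_midpoint (d : ℂ) (hd : ‖d‖ ≤ 1) :
    ∃ μ₁ μ₂ : ℂ, ‖μ₁‖ = 1 ∧ ‖μ₂‖ = 1 ∧ μ₁ + μ₂ = 2 * d := by
  by_cases h0 : d = 0
  · exact ⟨1, -1, by simp, by simp, by simp [h0]⟩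
  · have hd0 : 0 < ‖d‖ := norm_pos_iff.mpr h0
    have h1 : (1:ℝ) ≤ ‖d‖⁻¹ := (one_le_inv₀ hd0).mpr hd
    set t : ℝ := Real.sqrt (‖d‖⁻¹ ^ 2 - 1) with ht
    have ht2 : t ^ 2 = ‖d‖⁻¹ ^ 2 - 1 := Real.sq_sqrt (by nlinarith)
    have habs : ∀ (u : ℝ), ‖(1 : ℂ) + u * Complex.I‖ = Real.sqrt (1 + u^2) := by
      intro u
      rw [Complex.norm_def]
      congr 1
      simp [Complex.normSq_apply]
      ring
    have key : ∀ u : ℝ, u^2 = t^2 → ‖d * (1 + u * Complex.I)‖ = 1 := by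
      intro u hu
      rw [norm_mul, habs, hu, ht2, show (1:ℝ) + (‖d‖⁻¹^2 - 1) = ‖d‖⁻¹^2 by ring,
        Real.sqrt_sq (by positivity)]
      exact mul_inv_cancel₀ (ne_of_gt hd0)
    have hneg : (1 : ℂ) - t * Complex.I = 1 + (↑(-t) : ℝ) * Complex.I := by push_cast; ring
    refine ⟨d * (1 + t * Complex.I), d * (1 - t * Complex.I), key t rfl, ?_, by ring⟩
    rw [hneg]; exact key (-t) (by ring)

private lemma clinear_ext {X Y : Type*} [AddCommGroup X] [Module ℂ X] [AddCommGroup Y]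
    [Module ℂ Y] (g : X → Y) (hadd : ∀ u v, g (u + v) = g u + g v)
    (hhom : ∀ c : ℂ, ‖c‖ = 1 → ∀ v, g (c • v) = c • g v) :
    ∀ (c : ℂ) (v : X), g (c • v) = c • g v := by
  have g0 : g 0 = 0 := by
    have h := hadd 0 0
    rw [add_zero] at h
    exact (left_eq_add.mp h)
  have hnat : ∀ (n : ℕ) (v : X), g ((n : ℂ) • v) = (n : ℂ) • g v := by
    intro n
    induction n with
    | zero => intro v; simp [g0]
    | succ k ih =>
      intro v
      have h1 : ((k+1 : ℕ) : ℂ) • v = (k : ℂ) • v + v := by push_cast; rw [add_smul, one_smul]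
      rw [h1, hadd, ih]
      push_cast
      rw [add_smul, one_smul]
  have hhalf : ∀ v : X, g ((2⁻¹ : ℂ) • v) = (2⁻¹ : ℂ) • g v := by
    intro v
    have h2 := hnat 2 ((2⁻¹ : ℂ) • v)
    rw [smul_smul] at h2
    norm_num at h2
    rw [h2, smul_smul]
    norm_num
  have hsmall : ∀ d : ℂ, ‖d‖ ≤ 1 → ∀ v : X, g (d • v) = d • g v := by
    intro d hd v
    obtain ⟨μ₁, μ₂, hμ₁, hμ₂, hsum⟩ := circle_midpoint d hd
    have hdv : d • v = (2⁻¹ : ℂ) • (μ₁ • v + μ₂ • v) := by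
      rw [smul_add, smul_smul, smul_smul, ← add_smul]
      congr 1
      linear_combination -hsum / 2
    have hdv' : d • g v = (2⁻¹ : ℂ) • (μ₁ • g v + μ₂ • g v) := by
      rw [smul_add, smul_smul, smul_smul, ← add_smul]
      congr 1
      linear_combination -hsum / 2
    rw [hdv, hhalf, hadd, hhom μ₁ hμ₁, hhom μ₂ hμ₂, ← hdv']
  intro c v
  set n : ℕ := ⌈‖c‖⌉₊ + 1 with hn
  have hn0 : (0:ℝ) < (n : ℝ) := by positivity
  have hcn : ‖c / (n : ℂ)‖ ≤ 1 := by
    rw [norm_div]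
    rw [div_le_one (by simpa using hn0)]
    simp only [Complex.norm_natCast]
    calc ‖c‖ ≤ ⌈‖c‖⌉₊ := Nat.le_ceil _
    _ ≤ (n : ℝ) := by exact_mod_cast Nat.le_succ _
  have hcv : c • v = (n : ℂ) • ((c / n) • v) := by
    rw [smul_smul]
    congr 1
    field_simp [show (n:ℂ) ≠ 0 by exact_mod_cast hn0.ne']
  rw [hcv, hnat, hsmall _ hcn, smul_smul]
  congr 1
  field_simp [show (n:ℂ) ≠ 0 by exact_mod_cast hn0.ne']

private lemma mem_span_unitary {A : Type*} [NormedRing A] [StarRing A] [CStarRing A]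
    [NormedAlgebra ℂ A] [StarModule ℂ A] [CompleteSpace A] (x : A) :
    x ∈ Submodule.span ℂ ((unitary A : Set A)) := by
  letI : CStarAlgebra A := { }
  rcases subsingleton_or_nontrivial A with hA | hA
  · rw [Subsingleton.elim x 0]; exact Submodule.zero_mem _
  have key : ∀ h : A, IsSelfAdjoint h → ‖h‖ ≤ 1 →
      ∃ u : A, u ∈ unitary A ∧ h = (2⁻¹ : ℂ) • (u + star u) := by
    intro h hh hn
    set k := cfc (fun t : ℝ => Real.sqrt (1 - t^2)) h with hkdef
    have hksa : IsSelfAdjoint k := cfc_predicate _ h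
    have hcomm : h * k = k * h := by
      have hc := cfc_commute_cfc (id : ℝ → ℝ) (fun t : ℝ => Real.sqrt (1 - t^2)) h
      rw [cfc_id ℝ h] at hc
      exact hc.eq
    have hsp : ∀ t ∈ spectrum ℝ h, t^2 ≤ 1 := by
      intro t ht
      have h1 : ‖t‖ ≤ ‖h‖ := spectrum.norm_le_norm_of_mem ht
      have h2 : |t| ≤ 1 := by rw [← Real.norm_eq_abs]; exact h1.trans hn
      nlinarith [abs_nonneg t, sq_abs t]
    have hk2 : k^2 = cfc (fun t : ℝ => 1 - t^2) h := by
      rw [hkdef, ← cfc_pow (fun t : ℝ => Real.sqrt (1 - t^2)) 2 h]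
      exact cfc_congr fun t ht => Real.sq_sqrt (by nlinarith [hsp t ht])
    have hh2 : h^2 = cfc (fun t : ℝ => t^2) h := by
      rw [← cfc_pow_id (R := ℝ) h 2]
    have hsum : h^2 + k^2 = 1 := by
      rw [hh2, hk2, ← cfc_add h (fun t : ℝ => t^2) (fun t : ℝ => 1 - t^2)]
      calc cfc (fun t : ℝ => t^2 + (1 - t^2)) h = cfc (fun _ : ℝ => (1:ℝ)) h :=
            cfc_congr (fun t _ => by ring)
      _ = 1 := cfc_const_one ℝ h
    have hsum' : h * h + k * k = 1 := by
      have := hsum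
      rwa [pow_two, pow_two] at this
    set u := h + Complex.I • k with hudef
    have hstar : star u = h - Complex.I • k := by
      rw [hudef, star_add, star_smul, hh.star_eq, hksa.star_eq, Complex.star_def,
        Complex.conj_I, neg_smul, sub_eq_add_neg]
    have hmul1 : (h - Complex.I • k) * (h + Complex.I • k) = 1 := by
      have expand : (h - Complex.I • k) * (h + Complex.I • k)
          = h * h + Complex.I • (h * k) - Complex.I • (k * h)
            - (Complex.I * Complex.I) • (k * k) := by
        rw [sub_mul, mul_add, mul_add, mul_smul_comm, smul_mul_assoc, smul_mul_assoc,
          mul_smul_comm, smul_smul]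
        abel
      rw [expand, hcomm, Complex.I_mul_I, neg_smul, one_smul, add_sub_cancel_right,
        sub_neg_eq_add]
      exact hsum'
    have hmul2 : (h + Complex.I • k) * (h - Complex.I • k) = 1 := by
      have expand : (h + Complex.I • k) * (h - Complex.I • k)
          = h * h - Complex.I • (h * k) + Complex.I • (k * h)
            - (Complex.I * Complex.I) • (k * k) := by
        rw [add_mul, mul_sub, mul_sub, mul_smul_comm, smul_mul_assoc, smul_mul_assoc,
          mul_smul_comm, smul_smul]
        abel
      rw [expand, hcomm, Complex.I_mul_I, neg_smul, one_smul, sub_add_cancel,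
        sub_neg_eq_add]
      exact hsum'
    refine ⟨u, Unitary.mem_iff.mpr ⟨by rw [hstar]; exact hmul1, by rw [hstar]; exact hmul2⟩, ?_⟩
    rw [hstar, hudef]
    module
  have keySA : ∀ h : A, IsSelfAdjoint h → h ∈ Submodule.span ℂ ((unitary A : Set A)) := by
    intro h hh
    have hc : (0:ℝ) < ‖h‖ + 1 := by positivity
    have hc0 : ((‖h‖ + 1 : ℝ) : ℂ) ≠ 0 := by
      simp only [ne_eq, Complex.ofReal_eq_zero]
      positivity
    set h₀ : A := ((‖h‖ + 1 : ℝ) : ℂ)⁻¹ • h with hh₀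
    have hsa0 : IsSelfAdjoint h₀ := by
      rw [IsSelfAdjoint, hh₀, star_smul, hh.star_eq, star_inv₀, Complex.star_def,
        Complex.conj_ofReal]
    have hn0 : ‖h₀‖ ≤ 1 := by
      rw [hh₀, norm_smul, norm_inv, Complex.norm_real, Real.norm_eq_abs, abs_of_pos hc]
      rw [inv_mul_le_iff₀ hc, mul_one]
      linarith
    obtain ⟨u, hu, hrep⟩ := key h₀ hsa0 hn0
    have hxc : h = ((‖h‖ + 1 : ℝ) : ℂ) • h₀ := by
      rw [hh₀, smul_smul, mul_inv_cancel₀ hc0, one_smul]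
    rw [hxc, hrep, smul_smul, smul_add]
    exact Submodule.add_mem _ (Submodule.smul_mem _ _ (Submodule.subset_span hu))
      (Submodule.smul_mem _ _ (Submodule.subset_span (Unitary.star_mem hu)))
  have hsa1 : IsSelfAdjoint ((2⁻¹ : ℂ) • (x + star x)) := by
    rw [IsSelfAdjoint, star_smul, star_add, star_star]
    congr 1
    · simp
    · exact add_comm _ _
  have hsa2 : IsSelfAdjoint ((-(2⁻¹) * Complex.I : ℂ) • (x - star x)) := by
    rw [IsSelfAdjoint, star_smul, star_sub, star_star]
    rw [show star (-(2⁻¹) * Complex.I : ℂ) = (2⁻¹) * Complex.I by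
      simp [Complex.star_def, Complex.conj_I]]
    rw [show star x - x = -(x - star x) by abel, smul_neg, ← neg_smul]
    congr 1
    ring
  have hxeq : x = ((2⁻¹ : ℂ) • (x + star x))
      + Complex.I • ((-(2⁻¹) * Complex.I : ℂ) • (x - star x)) := by
    rw [smul_smul, show Complex.I * (-(2⁻¹) * Complex.I) = (2⁻¹ : ℂ) by
      rw [mul_comm, mul_assoc, Complex.I_mul_I]; ring]
    module
  rw [hxeq]
  exact Submodule.add_mem _ (keySA _ hsa1)
    (Submodule.smul_mem _ _ (keySA _ hsa2))

/-- A mapping `f : X³ → Y` is *tri-additive* if it is additive in each variable. -/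
def TriAdditive {X Y : Type*} [AddCommGroup X] [AddCommGroup Y]
    (f : X → X → X → Y) : Prop :=
  (∀ x x' z a : X, f (x + x') z a = f x z a + f x' z a) ∧
  (∀ x z z' a : X, f x (z + z') a = f x z a + f x z' a) ∧
  (∀ x z a a' : X, f x z (a + a') = f x z a + f x z a')

/-- A mapping `f : X³ → Y` is *ℂ-trilinear* if it is ℂ-linear in each variable. -/
def CTrilinear {X Y : Type*} [AddCommGroup X] [Module ℂ X] [AddCommGroup Y] [Module ℂ Y]
    (f : X → X → X → Y) : Prop :=
  TriAdditive f ∧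
  (∀ (c : ℂ) (x z a : X), f (c • x) z a = c • f x z a) ∧
  (∀ (c : ℂ) (x z a : X), f x (c • z) a = c • f x z a) ∧
  (∀ (c : ℂ) (x z a : X), f x z (c • a) = c • f x z a)

/-- `D₁f(x, y, z, w, a, b)`. -/
def D₁ {X Y : Type*} [AddCommGroup X] [Module ℂ X] [AddCommGroup Y] [Module ℂ Y]
    (f : X → X → X → Y) (x y z w a b : X) : Y :=
  f (x + y) (z - w) (a + b) + f (x - y) (z + w) (a - b)
    - (2 : ℂ) • f x z a + (2 : ℂ) • f x w b - (2 : ℂ) • f y z b + (2 : ℂ) • f y w a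

/-- `D₂f(x, y, z, w, a, b)`. -/
noncomputable def D₂ {X Y : Type*} [AddCommGroup X] [Module ℂ X] [AddCommGroup Y] [Module ℂ Y]
    (f : X → X → X → Y) (x y z w a b : X) : Y :=
  (2 : ℂ) • f ((2 : ℂ)⁻¹ • (x + y)) (z - w) (a + b)
    + (2 : ℂ) • f ((2 : ℂ)⁻¹ • (x - y)) (z + w) (a - b)
    - (2 : ℂ) • f x z a + (2 : ℂ) • f x w b - (2 : ℂ) • f y z b + (2 : ℂ) • f y w a


/-- A ℂ-trilinear `D : A³ → A` is a *permuting triderivation* if it is a derivation in the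
first variable and is invariant under every permutation of its three variables. -/
def PermutingTriderivation {A : Type*} [Ring A] [Module ℂ A]
    (D : A → A → A → A) : Prop :=
  CTrilinear D ∧
  (∀ x y z w : A, D (x * y) z w = D x z w * y + x * D y z w) ∧
  (∀ (σ : Equiv.Perm (Fin 3)) (x : Fin 3 → A),
    D (x (σ 0)) (x (σ 1)) (x (σ 2)) = D (x 0) (x 1) (x 2))

variable {A : Type*} [NormedRing A] [StarRing A] [CStarRing A]
  [NormedAlgebra ℂ A] [StarModule ℂ A] [CompleteSpace A]

theorem stmt_13 (s : ℂ) (hs0 : s ≠ 0) (hs1 : ‖s‖ < 1) (r θ : ℝ) (hr : 2 < r) (hθ : 0 ≤ θ)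
    (f : A → A → A → A)
    (hzero : ∀ x z a : A, f x 0 a = 0 ∧ f 0 z a = 0 ∧ f x z 0 = 0)
    (hineq : ∀ l m e : ℂ, ‖l‖ = 1 → ‖m‖ = 1 → ‖e‖ = 1 → ∀ x y z w a b : A,
      ‖(2 : ℂ) • f ((2 : ℂ)⁻¹ • (l • (x + y))) (m • (z - w)) (e • (a + b))
          + (2 : ℂ) • f ((2 : ℂ)⁻¹ • (l • (x - y))) (m • (z + w)) (e • (a - b))
          - (l * m * e) • ((2 : ℂ) • f x z a - (2 : ℂ) • f x w b
              + (2 : ℂ) • f y z b - (2 : ℂ) • f y w a)‖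
        ≤ ‖s • D₁ f x y z w a b‖ + θ * (‖x‖ ^ r + ‖y‖ ^ r) * (‖z‖ ^ r + ‖w‖ ^ r) * (‖a‖ ^ r + ‖b‖ ^ r)) :
    (∃! D : A → A → A → A, CTrilinear D ∧
      ∀ x z a : A, ‖f x z a - D x z a‖ ≤ (2 : ℝ) ^ r * θ / (2 * ((2 : ℝ) ^ r - 2)) * (‖x‖ ^ r * ‖z‖ ^ r * ‖a‖ ^ r)) ∧
    ((∀ (σ : Equiv.Perm (Fin 3)) (x : Fin 3 → A),
      ‖f (x (σ 0)) (x (σ 1)) (x (σ 2)) - f (x 0) (x 1) (x 2)‖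
        ≤ θ * ‖x 0‖ ^ r * ‖x 1‖ ^ r * ‖x 2‖ ^ r) →
     (∀ u : A, u ∈ unitary A → ∀ y z a : A,
      ‖f (u * y) z a - f u z a * y - u * f y z a‖
        ≤ θ * (1 + ‖y‖ ^ r) * ‖z‖ ^ r * ‖a‖ ^ r) →
     ∀ D : A → A → A → A,
       (CTrilinear D ∧ ∀ x z a : A, ‖f x z a - D x z a‖ ≤ (2 : ℝ) ^ r * θ / (2 * ((2 : ℝ) ^ r - 2)) * (‖x‖ ^ r * ‖z‖ ^ r * ‖a‖ ^ r)) →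
       PermutingTriderivation D) := by
  classical
  have hr1 : (1:ℝ) < r := by linarith
  have hr0 : r ≠ 0 := by intro h; rw [h] at hr; norm_num at hr
  have h2r4 : (4:ℝ) < (2:ℝ) ^ r := by
    calc (4:ℝ) = (2:ℝ) ^ (2:ℕ) := by norm_num
    _ = (2:ℝ) ^ ((2:ℕ):ℝ) := (Real.rpow_natCast _ _).symm
    _ < (2:ℝ) ^ r := by
        apply Real.rpow_lt_rpow_of_exponent_lt one_lt_two
        push_cast
        linarith
  have h2rpos : (0:ℝ) < (2:ℝ) ^ r := by linarith
  have h2rsub : (0:ℝ) < (2:ℝ) ^ r - 2 := by linarith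
  set K : ℝ := (2:ℝ) ^ r * θ / (2 * ((2:ℝ) ^ r - 2)) with hK
  have hK0 : 0 ≤ K := by
    rw [hK]
    apply div_nonneg (by positivity)
    nlinarith
  set ρ : ℝ := (2:ℝ)⁻¹ ^ r with hρ
  have hρpos : 0 < ρ := Real.rpow_pos_of_pos (by norm_num) r
  have hρhalf : ρ < 2⁻¹ := by
    have h := Real.rpow_lt_rpow_of_exponent_gt (x := (2:ℝ)⁻¹) (by norm_num) (by norm_num) hr1
    rw [Real.rpow_one] at h
    rw [hρ]
    exact h
  have hρinv : ρ = ((2:ℝ) ^ r)⁻¹ := by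
    rw [hρ, ← Real.inv_rpow (by norm_num : (0:ℝ) ≤ 2)]
  have hq0 : (0:ℝ) ≤ 2 * ρ := by linarith
  have hq1 : 2 * ρ < 1 := by linarith
  have hnormtwo : ‖(2:ℂ)‖ = (2:ℝ) := by simp
  have hnormpow : ∀ (n : ℕ) (v : A), ‖(2:ℂ) ^ n • v‖ = 2 ^ n * ‖v‖ := by
    intro n v
    rw [norm_smul, norm_pow, hnormtwo]
  have hsc : ∀ (n : ℕ) (x : A), ‖((2:ℂ) ^ n)⁻¹ • x‖ ^ r = ρ ^ n * ‖x‖ ^ r := by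
    intro n x
    rw [norm_smul, norm_inv, norm_pow, hnormtwo, ← inv_pow,
      Real.mul_rpow (by positivity) (norm_nonneg x)]
    congr 1
    rw [← Real.rpow_natCast ((2:ℝ)⁻¹) n, ← Real.rpow_mul (by norm_num), mul_comm ((n:ℝ)) r,
      Real.rpow_mul (by norm_num), Real.rpow_natCast]
  have hgeo : ∀ (q C : ℝ), 0 ≤ q → q < 1 → Tendsto (fun n : ℕ => C * q ^ n) atTop (𝓝 0) := by
    intro q C hq0' hq1'
    have h := (tendsto_pow_atTop_nhds_zero_of_lt_one hq0' hq1').const_mul C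
    simpa using h
  have htwo : ∀ u v : A, (2:ℂ) • u = (2:ℂ) • v → u = v := by
    intro u v h
    have h' := congrArg (fun w : A => (2⁻¹:ℂ) • w) h
    simp only [smul_smul] at h'
    norm_num at h'
    exact h'
  have hresc : ∀ (n : ℕ) (v : A), (2:ℂ) ^ n • (((2:ℂ) ^ n)⁻¹ • v) = v := by
    intro n v
    rw [smul_smul, mul_inv_cancel₀ (pow_ne_zero _ two_ne_zero), one_smul]
  have hargS : ∀ (n : ℕ) (v : A), (2:ℂ)⁻¹ • ((2:ℂ) ^ n)⁻¹ • v = ((2:ℂ) ^ (n+1))⁻¹ • v := by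
    intro n v
    rw [smul_smul]
    congr 1
    rw [pow_succ, mul_inv, mul_comm]
  -- cleaned inequality
  have hclean : ∀ l m e : ℂ, ‖l‖ = 1 → ‖m‖ = 1 → ‖e‖ = 1 → ∀ x z a : A,
      ‖(2:ℂ) • ((2:ℂ) • f ((2:ℂ)⁻¹ • l • x) (m • z) (e • a) - (l * m * e) • f x z a)‖
        ≤ θ * ‖x‖ ^ r * ‖z‖ ^ r * ‖a‖ ^ r := by
    intro l m e hl hm he x z a
    have h := hineq l m e hl hm he x 0 z 0 a 0
    have e1 : f x 0 0 = 0 := (hzero x 0 0).1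
    have e2 : f 0 z 0 = 0 := (hzero 0 z 0).2.2
    have e3 : f 0 0 a = 0 := (hzero 0 0 a).2.1
    have hD1 : D₁ f x 0 z 0 a 0 = 0 := by
      simp only [D₁, add_zero, sub_zero, e1, e2, e3, smul_zero]
      rw [two_smul]
      abel
    rw [hD1, smul_zero, norm_zero, zero_add] at h
    simp only [add_zero, sub_zero, e1, e2, e3, smul_zero, norm_zero, Real.zero_rpow hr0] at h
    have hvec : (2:ℂ) • ((2:ℂ) • f ((2:ℂ)⁻¹ • l • x) (m • z) (e • a) - (l * m * e) • f x z a)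
        = (2:ℂ) • f ((2:ℂ)⁻¹ • l • x) (m • z) (e • a)
          + (2:ℂ) • f ((2:ℂ)⁻¹ • l • x) (m • z) (e • a)
          - (l * m * e) • ((2:ℂ) • f x z a) := by
      module
    rw [hvec]
    exact h
  -- the approximating sequence
  set g : ℕ → A → A → A → A := fun n x z a => (2:ℂ) ^ n • f (((2:ℂ) ^ n)⁻¹ • x) z a with hg
  have hg0 : ∀ x z a : A, g 0 x z a = f x z a := by
    intro x z a
    simp [hg]
  have hE1 : ∀ x z a : A, ‖(2:ℂ) • f ((2:ℂ)⁻¹ • x) z a - f x z a‖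
      ≤ θ / 2 * (‖x‖ ^ r * ‖z‖ ^ r * ‖a‖ ^ r) := by
    intro x z a
    have h := hclean 1 1 1 (by simp) (by simp) (by simp) x z a
    simp only [one_smul, mul_one] at h
    rw [norm_smul, hnormtwo] at h
    nlinarith [norm_nonneg ((2:ℂ) • f ((2:ℂ)⁻¹ • x) z a - f x z a)]
  have hEn : ∀ (n : ℕ) (x z a : A), ‖g (n+1) x z a - g n x z a‖
      ≤ (θ / 2 * (‖x‖ ^ r * ‖z‖ ^ r * ‖a‖ ^ r)) * (2*ρ) ^ n := by
    intro n x z a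
    have hg1 : g (n+1) x z a - g n x z a
        = (2:ℂ) ^ n • ((2:ℂ) • f ((2:ℂ)⁻¹ • ((2:ℂ) ^ n)⁻¹ • x) z a
            - f (((2:ℂ) ^ n)⁻¹ • x) z a) := by
      simp only [hg]
      rw [hargS n x, smul_sub, smul_smul, ← pow_succ]
    rw [hg1, hnormpow]
    have h := hE1 (((2:ℂ) ^ n)⁻¹ • x) z a
    rw [hsc n x] at h
    calc (2:ℝ) ^ n * ‖(2:ℂ) • f ((2:ℂ)⁻¹ • ((2:ℂ) ^ n)⁻¹ • x) z a - f (((2:ℂ) ^ n)⁻¹ • x) z a‖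
        ≤ 2 ^ n * (θ / 2 * (ρ ^ n * ‖x‖ ^ r * ‖z‖ ^ r * ‖a‖ ^ r)) := by
          apply mul_le_mul_of_nonneg_left _ (by positivity)
          calc ‖_‖ ≤ θ / 2 * (ρ ^ n * ‖x‖ ^ r * (‖z‖ ^ r * ‖a‖ ^ r)) := by
                have h' := h
                rw [show ρ ^ n * ‖x‖ ^ r * (‖z‖ ^ r * ‖a‖ ^ r)
                  = ρ ^ n * ‖x‖ ^ r * ‖z‖ ^ r * ‖a‖ ^ r by ring]
                exact h'
          _ = θ / 2 * (ρ ^ n * ‖x‖ ^ r * ‖z‖ ^ r * ‖a‖ ^ r) := by ring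
    _ = (θ / 2 * (‖x‖ ^ r * ‖z‖ ^ r * ‖a‖ ^ r)) * (2*ρ) ^ n := by ring
  have hcau : ∀ x z a : A, CauchySeq (fun n => g n x z a) := by
    intro x z a
    apply cauchySeq_of_le_geometric (2*ρ) (θ/2*(‖x‖^r*‖z‖^r*‖a‖^r)) hq1
    intro n
    rw [dist_eq_norm, norm_sub_rev]
    exact hEn n x z a
  choose D hD using fun x z a => cauchySeq_tendsto_of_complete (hcau x z a)
  have hDshift : ∀ v1 v2 v3 : A, Tendsto (fun n => g (n+1) v1 v2 v3) atTop (𝓝 (D v1 v2 v3)) :=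
    fun v1 v2 v3 => (hD v1 v2 v3).comp (tendsto_add_atTop_nat 1)
  -- the approximation bound
  have hbound : ∀ x z a : A, ‖f x z a - D x z a‖ ≤ K * (‖x‖^r * ‖z‖^r * ‖a‖^r) := by
    intro x z a
    have hd := dist_le_of_le_geometric_of_tendsto₀ (2*ρ) (θ/2*(‖x‖^r*‖z‖^r*‖a‖^r)) hq1
      (fun n => by rw [dist_eq_norm, norm_sub_rev]; exact hEn n x z a) (hD x z a)
    rw [hg0, dist_eq_norm] at hd
    refine hd.trans (le_of_eq ?_)
    have hne : (1:ℝ) - 2 * ρ ≠ 0 := by linarith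
    have h2rne : ((2:ℝ)^r) ≠ 0 := ne_of_gt h2rpos
    rw [hρinv, hK]
    field_simp
  -- zero values of D
  have hDz1 : ∀ z a : A, D 0 z a = 0 := by
    intro z a
    refine tendsto_nhds_unique (hD 0 z a) ?_
    have h0 : (fun n => g n 0 z a) = fun _ => (0:A) := by
      funext n
      simp only [hg, smul_zero]
      rw [(hzero 0 z a).2.1, smul_zero]
    rw [h0]
    exact tendsto_const_nhds
  have hDz2 : ∀ x a : A, D x 0 a = 0 := by
    intro x a
    refine tendsto_nhds_unique (hD x 0 a) ?_
    have h0 : (fun n => g n x 0 a) = fun _ => (0:A) := by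
      funext n
      simp only [hg]
      rw [(hzero _ 0 a).1, smul_zero]
    rw [h0]
    exact tendsto_const_nhds
  have hDz3 : ∀ x z : A, D x z 0 = 0 := by
    intro x z
    refine tendsto_nhds_unique (hD x z 0) ?_
    have h0 : (fun n => g n x z 0) = fun _ => (0:A) := by
      funext n
      simp only [hg]
      rw [(hzero _ z 0).2.2, smul_zero]
    rw [h0]
    exact tendsto_const_nhds
  -- simultaneous unit-scalar homogeneity
  have hhomD : ∀ l m e : ℂ, ‖l‖ = 1 → ‖m‖ = 1 → ‖e‖ = 1 → ∀ x z a : A,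
      D (l • x) (m • z) (e • a) = (l * m * e) • D x z a := by
    intro l m e hl hm he x z a
    have hseq : ∀ n : ℕ, ‖(2:ℂ) • g (n+1) (l • x) (m • z) (e • a)
        - (2:ℂ) • (l*m*e) • g n x z a‖
        ≤ (θ * (‖x‖^r * ‖z‖^r * ‖a‖^r)) * (2*ρ)^n := by
      intro n
      have h := hclean l m e hl hm he (((2:ℂ)^n)⁻¹ • x) z a
      rw [hsc n x] at h
      have hvec : (2:ℂ)^n • ((2:ℂ) • ((2:ℂ) • f ((2:ℂ)⁻¹ • l • ((2:ℂ)^n)⁻¹ • x) (m • z) (e • a)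
            - (l*m*e) • f (((2:ℂ)^n)⁻¹ • x) z a))
          = (2:ℂ) • g (n+1) (l • x) (m • z) (e • a) - (2:ℂ) • (l*m*e) • g n x z a := by
        simp only [hg]
        have harg2 : (2:ℂ)⁻¹ • l • ((2:ℂ)^n)⁻¹ • x = ((2:ℂ)^(n+1))⁻¹ • l • x := by
          simp only [smul_smul]
          congr 1
          rw [pow_succ, mul_inv]
          ring
        rw [harg2]
        module
      rw [← hvec, hnormpow]
      calc (2:ℝ)^n * ‖(2:ℂ) • ((2:ℂ) • f ((2:ℂ)⁻¹ • l • ((2:ℂ)^n)⁻¹ • x) (m • z) (e • a)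
            - (l*m*e) • f (((2:ℂ)^n)⁻¹ • x) z a)‖
          ≤ (2:ℝ)^n * (θ * (ρ^n * ‖x‖^r) * ‖z‖^r * ‖a‖^r) :=
            mul_le_mul_of_nonneg_left h (by positivity)
      _ = (θ * (‖x‖^r * ‖z‖^r * ‖a‖^r)) * (2*ρ)^n := by ring
    have hlim1 : Tendsto (fun n => (2:ℂ) • g (n+1) (l • x) (m • z) (e • a)
        - (2:ℂ) • (l*m*e) • g n x z a) atTop
        (𝓝 ((2:ℂ) • D (l • x) (m • z) (e • a) - (2:ℂ) • (l*m*e) • D x z a)) :=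
      ((hDshift _ _ _).const_smul _).sub (((hD x z a).const_smul _).const_smul _)
    have hlim0 : Tendsto (fun n => (2:ℂ) • g (n+1) (l • x) (m • z) (e • a)
        - (2:ℂ) • (l*m*e) • g n x z a) atTop (𝓝 0) :=
      squeeze_zero_norm hseq (hgeo _ _ hq0 hq1)
    have h0 := tendsto_nhds_unique hlim1 hlim0
    have h2 := sub_eq_zero.mp h0
    exact htwo _ _ h2
  -- the fundamental identity for D
  have hDD : ∀ x y z w a b : A,
      D (x+y) (z-w) (a+b) + D (x-y) (z+w) (a-b) - (2:ℂ) • D x z a + (2:ℂ) • D x w b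
        - (2:ℂ) • D y z b + (2:ℂ) • D y w a = 0 := by
    intro x y z w a b
    set Sn : ℕ → A := fun n => g (n+1) (x+y) (z-w) (a+b) + g (n+1) (x-y) (z+w) (a-b)
      - (2:ℂ) • g n x z a + (2:ℂ) • g n x w b - (2:ℂ) • g n y z b + (2:ℂ) • g n y w a with hSn
    set Mn : ℕ → A := fun n => g n (x+y) (z-w) (a+b) + g n (x-y) (z+w) (a-b)
      - (2:ℂ) • g n x z a + (2:ℂ) • g n x w b - (2:ℂ) • g n y z b + (2:ℂ) • g n y w a with hMn
    have hSnorm : ∀ n, ‖Sn n‖ ≤ ‖s‖ * ‖Mn n‖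
        + (θ * ((‖x‖^r + ‖y‖^r) * (‖z‖^r + ‖w‖^r) * (‖a‖^r + ‖b‖^r))) * (2*ρ)^n := by
      intro n
      have h := hineq 1 1 1 (by simp) (by simp) (by simp)
        (((2:ℂ)^n)⁻¹ • x) (((2:ℂ)^n)⁻¹ • y) z w a b
      simp only [one_smul, one_mul, mul_one] at h
      rw [← smul_add (((2:ℂ)^n)⁻¹) x y, ← smul_sub (((2:ℂ)^n)⁻¹) x y, hsc n x, hsc n y] at h
      have hSvec : Sn n = (2:ℂ)^n • ((2:ℂ) • f ((2:ℂ)⁻¹ • ((2:ℂ)^n)⁻¹ • (x+y)) (z-w) (a+b)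
          + (2:ℂ) • f ((2:ℂ)⁻¹ • ((2:ℂ)^n)⁻¹ • (x-y)) (z+w) (a-b)
          - ((2:ℂ) • f (((2:ℂ)^n)⁻¹ • x) z a - (2:ℂ) • f (((2:ℂ)^n)⁻¹ • x) w b
            + (2:ℂ) • f (((2:ℂ)^n)⁻¹ • y) z b - (2:ℂ) • f (((2:ℂ)^n)⁻¹ • y) w a)) := by
        simp only [hSn, hg]
        rw [hargS n (x+y), hargS n (x-y)]
        module
      have hMvec : Mn n = (2:ℂ)^n • D₁ f (((2:ℂ)^n)⁻¹ • x) (((2:ℂ)^n)⁻¹ • y) z w a b := by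
        simp only [hMn, hg, D₁, smul_add, smul_sub]
        module
      calc ‖Sn n‖ = (2:ℝ)^n * ‖(2:ℂ) • f ((2:ℂ)⁻¹ • ((2:ℂ)^n)⁻¹ • (x+y)) (z-w) (a+b)
          + (2:ℂ) • f ((2:ℂ)⁻¹ • ((2:ℂ)^n)⁻¹ • (x-y)) (z+w) (a-b)
          - ((2:ℂ) • f (((2:ℂ)^n)⁻¹ • x) z a - (2:ℂ) • f (((2:ℂ)^n)⁻¹ • x) w b
            + (2:ℂ) • f (((2:ℂ)^n)⁻¹ • y) z b - (2:ℂ) • f (((2:ℂ)^n)⁻¹ • y) w a)‖ := by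
            rw [hSvec, hnormpow]
      _ ≤ (2:ℝ)^n * (‖s • D₁ f (((2:ℂ)^n)⁻¹ • x) (((2:ℂ)^n)⁻¹ • y) z w a b‖
            + θ * (ρ^n * ‖x‖^r + ρ^n * ‖y‖^r) * (‖z‖^r + ‖w‖^r) * (‖a‖^r + ‖b‖^r)) :=
          mul_le_mul_of_nonneg_left h (by positivity)
      _ = ‖s‖ * ((2:ℝ)^n * ‖D₁ f (((2:ℂ)^n)⁻¹ • x) (((2:ℂ)^n)⁻¹ • y) z w a b‖)
            + (θ * ((‖x‖^r + ‖y‖^r) * (‖z‖^r + ‖w‖^r) * (‖a‖^r + ‖b‖^r))) * (2*ρ)^n := by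
          rw [norm_smul]; ring
      _ = ‖s‖ * ‖Mn n‖
            + (θ * ((‖x‖^r + ‖y‖^r) * (‖z‖^r + ‖w‖^r) * (‖a‖^r + ‖b‖^r))) * (2*ρ)^n := by
          rw [hMvec, hnormpow]
    have hSlim : Tendsto Sn atTop (𝓝 (D (x+y) (z-w) (a+b) + D (x-y) (z+w) (a-b)
        - (2:ℂ) • D x z a + (2:ℂ) • D x w b - (2:ℂ) • D y z b + (2:ℂ) • D y w a)) := by
      apply Tendsto.add
      apply Tendsto.sub
      apply Tendsto.add
      apply Tendsto.sub
      apply Tendsto.add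
      · exact hDshift _ _ _
      · exact hDshift _ _ _
      · exact (hD x z a).const_smul _
      · exact (hD x w b).const_smul _
      · exact (hD y z b).const_smul _
      · exact (hD y w a).const_smul _
    have hMlim : Tendsto Mn atTop (𝓝 (D (x+y) (z-w) (a+b) + D (x-y) (z+w) (a-b)
        - (2:ℂ) • D x z a + (2:ℂ) • D x w b - (2:ℂ) • D y z b + (2:ℂ) • D y w a)) := by
      apply Tendsto.add
      apply Tendsto.sub
      apply Tendsto.add
      apply Tendsto.sub
      apply Tendsto.add
      · exact hD _ _ _
      · exact hD _ _ _
      · exact (hD x z a).const_smul _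
      · exact (hD x w b).const_smul _
      · exact (hD y z b).const_smul _
      · exact (hD y w a).const_smul _
    set Δ : A := D (x+y) (z-w) (a+b) + D (x-y) (z+w) (a-b)
        - (2:ℂ) • D x z a + (2:ℂ) • D x w b - (2:ℂ) • D y z b + (2:ℂ) • D y w a with hΔ
    have h1 : Tendsto (fun n => ‖Sn n‖) atTop (𝓝 ‖Δ‖) := hSlim.norm
    have h2 : Tendsto (fun n => ‖s‖ * ‖Mn n‖
        + (θ * ((‖x‖^r + ‖y‖^r) * (‖z‖^r + ‖w‖^r) * (‖a‖^r + ‖b‖^r))) * (2*ρ)^n) atTop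
        (𝓝 (‖s‖ * ‖Δ‖ + 0)) :=
      (hMlim.norm.const_mul _).add (hgeo _ _ hq0 hq1)
    have hle : ‖Δ‖ ≤ ‖s‖ * ‖Δ‖ + 0 := le_of_tendsto_of_tendsto' h1 h2 hSnorm
    have hΔ0 : ‖Δ‖ = 0 := by nlinarith [norm_nonneg Δ]
    exact norm_eq_zero.mp hΔ0
  -- additivity in the first variable
  have hP1 : ∀ x y z a : A, D (x+y) z a + D (x-y) z a = (2:ℂ) • D x z a := by
    intro x y z a
    have h := hDD x y z 0 a 0
    simp only [sub_zero, add_zero, hDz1, hDz2, hDz3, smul_zero] at h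
    exact sub_eq_zero.mp h
  have hdbl1 : ∀ x z a : A, D (x+x) z a = (2:ℂ) • D x z a := by
    intro x z a
    have h := hP1 x x z a
    rwa [sub_self, hDz1, add_zero] at h
  have hadd1 : ∀ u v z a : A, D (u+v) z a = D u z a + D v z a := by
    intro u v z a
    have h := hP1 ((2⁻¹:ℂ) • (u+v)) ((2⁻¹:ℂ) • (u-v)) z a
    have e1 : (2⁻¹:ℂ) • (u+v) + (2⁻¹:ℂ) • (u-v) = u := by module
    have e2 : (2⁻¹:ℂ) • (u+v) - (2⁻¹:ℂ) • (u-v) = v := by module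
    rw [e1, e2] at h
    have h4 := hdbl1 ((2⁻¹:ℂ) • (u+v)) z a
    have e3 : (2⁻¹:ℂ) • (u+v) + (2⁻¹:ℂ) • (u+v) = u + v := by module
    rw [e3] at h4
    rw [h, ← h4]
  -- additivity in the third variable
  have hP3 : ∀ x z a b : A, D x z (a+b) + D x z (a-b) = (2:ℂ) • D x z a := by
    intro x z a b
    have h := hDD x 0 z 0 a b
    simp only [sub_zero, add_zero, hDz1, hDz2, hDz3, smul_zero] at h
    exact sub_eq_zero.mp h
  have hdbl3 : ∀ x z a : A, D x z (a+a) = (2:ℂ) • D x z a := by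
    intro x z a
    have h := hP3 x z a a
    rwa [sub_self, hDz3, add_zero] at h
  have hadd3 : ∀ x z a b : A, D x z (a+b) = D x z a + D x z b := by
    intro x z a b
    have h := hP3 x z ((2⁻¹:ℂ) • (a+b)) ((2⁻¹:ℂ) • (a-b))
    have e1 : (2⁻¹:ℂ) • (a+b) + (2⁻¹:ℂ) • (a-b) = a := by module
    have e2 : (2⁻¹:ℂ) • (a+b) - (2⁻¹:ℂ) • (a-b) = b := by module
    rw [e1, e2] at h
    have h4 := hdbl3 x z ((2⁻¹:ℂ) • (a+b))
    have e3 : (2⁻¹:ℂ) • (a+b) + (2⁻¹:ℂ) • (a+b) = a + b := by module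
    rw [e3] at h4
    rw [h, ← h4]
  -- additivity in the second variable
  have hsub2 : ∀ x z w a : A, D x (z-w) a = D x z a - D x w a := by
    intro x z w a
    have h := hDD x 0 z w a a
    simp only [sub_zero, add_zero, sub_self, hDz1, hDz2, hDz3, smul_zero] at h
    rw [hdbl3 x (z-w) a] at h
    have h2 : (2:ℂ) • D x (z-w) a = (2:ℂ) • (D x z a - D x w a) := by
      rw [← sub_eq_zero, ← h]
      module
    exact htwo _ _ h2
  have hneg2 : ∀ x w a : A, D x (-w) a = - D x w a := by
    intro x w a
    have h := hsub2 x 0 w a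
    rwa [zero_sub, hDz2, zero_sub] at h
  have hadd2 : ∀ x z w a : A, D x (z+w) a = D x z a + D x w a := by
    intro x z w a
    have h := hsub2 x z (-w) a
    rw [sub_neg_eq_add] at h
    rw [h, hneg2, sub_neg_eq_add]
  -- full ℂ-linearity
  have hhom1 : ∀ c : ℂ, ‖c‖ = 1 → ∀ x z a : A, D (c • x) z a = c • D x z a := by
    intro c hc x z a
    have h := hhomD c 1 1 hc (by simp) (by simp) x z a
    simpa using h
  have hhom2 : ∀ c : ℂ, ‖c‖ = 1 → ∀ x z a : A, D x (c • z) a = c • D x z a := by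
    intro c hc x z a
    have h := hhomD 1 c 1 (by simp) hc (by simp) x z a
    simpa using h
  have hhom3 : ∀ c : ℂ, ‖c‖ = 1 → ∀ x z a : A, D x z (c • a) = c • D x z a := by
    intro c hc x z a
    have h := hhomD 1 1 c (by simp) (by simp) hc x z a
    simpa using h
  have hsmul1 : ∀ (c : ℂ) (x z a : A), D (c • x) z a = c • D x z a := by
    intro c x z a
    exact clinear_ext (fun v => D v z a) (fun u v => hadd1 u v z a)
      (fun μ hμ v => hhom1 μ hμ v z a) c x
  have hsmul2 : ∀ (c : ℂ) (x z a : A), D x (c • z) a = c • D x z a := by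
    intro c x z a
    exact clinear_ext (fun v => D x v a) (fun u v => hadd2 x u v a)
      (fun μ hμ v => hhom2 μ hμ x v a) c z
  have hsmul3 : ∀ (c : ℂ) (x z a : A), D x z (c • a) = c • D x z a := by
    intro c x z a
    exact clinear_ext (fun v => D x z v) (fun u v => hadd3 x z u v)
      (fun μ hμ v => hhom3 μ hμ x z v) c a
  have hCTri : CTrilinear D :=
    ⟨⟨fun x x' z a => hadd1 x x' z a, fun x z z' a => hadd2 x z z' a,
      fun x z a a' => hadd3 x z a a'⟩, hsmul1, hsmul2, hsmul3⟩
  -- general lemma: any map satisfying the conclusion equals D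
  have huniq : ∀ D' : A → A → A → A, (CTrilinear D' ∧ ∀ x z a : A,
      ‖f x z a - D' x z a‖ ≤ K * (‖x‖^r * ‖z‖^r * ‖a‖^r)) → D' = D := by
    intro D' hD'
    obtain ⟨hT', hb'⟩ := hD'
    funext x z a
    have hkey : ∀ n : ℕ, ‖D' x z a - D x z a‖
        ≤ (2 * K * (‖x‖^r * ‖z‖^r * ‖a‖^r)) * (2*ρ)^n := by
      intro n
      have hzn : ((2:ℂ)^n) • (((2:ℂ)^n)⁻¹ • z) = z := hresc n z
      have e1 : D' x z a = (2:ℂ)^n • D' x (((2:ℂ)^n)⁻¹ • z) a := by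
        rw [← hT'.2.2.1, hzn]
      have e2 : D x z a = (2:ℂ)^n • D x (((2:ℂ)^n)⁻¹ • z) a := by
        rw [← hsmul2, hzn]
      rw [e1, e2, ← smul_sub, hnormpow]
      have htri : ‖D' x (((2:ℂ)^n)⁻¹ • z) a - D x (((2:ℂ)^n)⁻¹ • z) a‖
          ≤ ‖f x (((2:ℂ)^n)⁻¹ • z) a - D' x (((2:ℂ)^n)⁻¹ • z) a‖
            + ‖f x (((2:ℂ)^n)⁻¹ • z) a - D x (((2:ℂ)^n)⁻¹ • z) a‖ := by
        have e3 : D' x (((2:ℂ)^n)⁻¹ • z) a - D x (((2:ℂ)^n)⁻¹ • z) a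
            = (f x (((2:ℂ)^n)⁻¹ • z) a - D x (((2:ℂ)^n)⁻¹ • z) a)
              - (f x (((2:ℂ)^n)⁻¹ • z) a - D' x (((2:ℂ)^n)⁻¹ • z) a) := by abel
        rw [e3, add_comm]
        exact norm_sub_le _ _
      have hb1 := hb' x (((2:ℂ)^n)⁻¹ • z) a
      have hb2 := hbound x (((2:ℂ)^n)⁻¹ • z) a
      rw [hsc n z] at hb1 hb2
      calc (2:ℝ)^n * ‖D' x (((2:ℂ)^n)⁻¹ • z) a - D x (((2:ℂ)^n)⁻¹ • z) a‖
          ≤ (2:ℝ)^n * (K * (‖x‖^r * (ρ^n * ‖z‖^r) * ‖a‖^r)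
            + K * (‖x‖^r * (ρ^n * ‖z‖^r) * ‖a‖^r)) := by
            apply mul_le_mul_of_nonneg_left _ (by positivity)
            exact htri.trans (add_le_add hb1 hb2)
      _ = (2 * K * (‖x‖^r * ‖z‖^r * ‖a‖^r)) * (2*ρ)^n := by ring
    have hlim := hgeo (2*ρ) (2 * K * (‖x‖^r * ‖z‖^r * ‖a‖^r)) hq0 hq1
    have hle : ‖D' x z a - D x z a‖ ≤ 0 :=
      le_of_tendsto_of_tendsto' tendsto_const_nhds hlim hkey
    have := norm_le_zero_iff.mp hle
    exact sub_eq_zero.mp this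
  refine ⟨⟨D, ⟨hCTri, hbound⟩, huniq⟩, ?_⟩
  -- Part 2
  intro hperm hder D' hD'
  have hD'c := hD'
  obtain ⟨hT', hb'⟩ := hD'c
  have hresc3 : ∀ (n : ℕ) (v1 v2 v3 : A), D' v1 v2 v3
      = (2:ℂ)^n • ((2:ℂ)^n • ((2:ℂ)^n • D' (((2:ℂ)^n)⁻¹ • v1) (((2:ℂ)^n)⁻¹ • v2)
          (((2:ℂ)^n)⁻¹ • v3))) := by
    intro n v1 v2 v3
    rw [← hT'.2.1, hresc, ← hT'.2.2.1, hresc, ← hT'.2.2.2, hresc]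
  have hresc2 : ∀ (n : ℕ) (w z a : A), D' w z a
      = (2:ℂ)^n • ((2:ℂ)^n • D' w (((2:ℂ)^n)⁻¹ • z) (((2:ℂ)^n)⁻¹ • a)) := by
    intro n w z a
    rw [← hT'.2.2.1, hresc, ← hT'.2.2.2, hresc]
  have hD'0 : ∀ z a : A, D' 0 z a = 0 := by
    intro z a
    have h := hT'.2.1 0 0 z a
    simpa using h
  -- derivation property at unitaries
  have hu1 : ∀ u : A, u ∈ unitary A → ∀ v z a : A,
      D' (u*v) z a = D' u z a * v + u * D' v z a := by
    intro u hu v z a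
    have hkey : ∀ n : ℕ, ‖D' (u*v) z a - D' u z a * v - u * D' v z a‖
        ≤ ((K * ‖u*v‖^r + θ * (1+‖v‖^r) + K * ‖u‖^r * ‖v‖ + ‖u‖ * (K * ‖v‖^r))
            * (‖z‖^r * ‖a‖^r)) * ((2*ρ)^n)^2 := by
      intro n
      have e : D' (u*v) z a - D' u z a * v - u * D' v z a
          = (2:ℂ)^n • ((2:ℂ)^n • (D' (u*v) (((2:ℂ)^n)⁻¹ • z) (((2:ℂ)^n)⁻¹ • a)
            - D' u (((2:ℂ)^n)⁻¹ • z) (((2:ℂ)^n)⁻¹ • a) * v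
            - u * D' v (((2:ℂ)^n)⁻¹ • z) (((2:ℂ)^n)⁻¹ • a))) := by
        rw [hresc2 n (u*v) z a, hresc2 n u z a, hresc2 n v z a]
        simp only [smul_sub, smul_mul_assoc, mul_smul_comm]
      rw [e, hnormpow, hnormpow]
      have heq : D' (u*v) (((2:ℂ)^n)⁻¹ • z) (((2:ℂ)^n)⁻¹ • a)
            - D' u (((2:ℂ)^n)⁻¹ • z) (((2:ℂ)^n)⁻¹ • a) * v
            - u * D' v (((2:ℂ)^n)⁻¹ • z) (((2:ℂ)^n)⁻¹ • a)
          = -(f (u*v) (((2:ℂ)^n)⁻¹ • z) (((2:ℂ)^n)⁻¹ • a)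
              - D' (u*v) (((2:ℂ)^n)⁻¹ • z) (((2:ℂ)^n)⁻¹ • a))
            + (f (u*v) (((2:ℂ)^n)⁻¹ • z) (((2:ℂ)^n)⁻¹ • a)
              - f u (((2:ℂ)^n)⁻¹ • z) (((2:ℂ)^n)⁻¹ • a) * v
              - u * f v (((2:ℂ)^n)⁻¹ • z) (((2:ℂ)^n)⁻¹ • a))
            + ((f u (((2:ℂ)^n)⁻¹ • z) (((2:ℂ)^n)⁻¹ • a)
              - D' u (((2:ℂ)^n)⁻¹ • z) (((2:ℂ)^n)⁻¹ • a)) * v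
            + u * (f v (((2:ℂ)^n)⁻¹ • z) (((2:ℂ)^n)⁻¹ • a)
              - D' v (((2:ℂ)^n)⁻¹ • z) (((2:ℂ)^n)⁻¹ • a))) := by
        rw [sub_mul, mul_sub]
        abel
      have hn1 : ‖-(f (u*v) (((2:ℂ)^n)⁻¹ • z) (((2:ℂ)^n)⁻¹ • a)
          - D' (u*v) (((2:ℂ)^n)⁻¹ • z) (((2:ℂ)^n)⁻¹ • a))‖
          ≤ K * (‖u*v‖^r * (ρ^n * ‖z‖^r) * (ρ^n * ‖a‖^r)) := by
        rw [norm_neg]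
        have h := hb' (u*v) (((2:ℂ)^n)⁻¹ • z) (((2:ℂ)^n)⁻¹ • a)
        rw [hsc n z, hsc n a] at h
        exact h
      have hn2 : ‖f (u*v) (((2:ℂ)^n)⁻¹ • z) (((2:ℂ)^n)⁻¹ • a)
          - f u (((2:ℂ)^n)⁻¹ • z) (((2:ℂ)^n)⁻¹ • a) * v
          - u * f v (((2:ℂ)^n)⁻¹ • z) (((2:ℂ)^n)⁻¹ • a)‖
          ≤ θ * (1+‖v‖^r) * (ρ^n * ‖z‖^r) * (ρ^n * ‖a‖^r) := by
        have h := hder u hu v (((2:ℂ)^n)⁻¹ • z) (((2:ℂ)^n)⁻¹ • a)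
        rw [hsc n z, hsc n a] at h
        exact h
      have hn3 : ‖(f u (((2:ℂ)^n)⁻¹ • z) (((2:ℂ)^n)⁻¹ • a)
          - D' u (((2:ℂ)^n)⁻¹ • z) (((2:ℂ)^n)⁻¹ • a)) * v‖
          ≤ K * (‖u‖^r * (ρ^n * ‖z‖^r) * (ρ^n * ‖a‖^r)) * ‖v‖ := by
        have h := hb' u (((2:ℂ)^n)⁻¹ • z) (((2:ℂ)^n)⁻¹ • a)
        rw [hsc n z, hsc n a] at h
        exact (norm_mul_le _ _).trans (mul_le_mul_of_nonneg_right h (norm_nonneg v))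
      have hn4 : ‖u * (f v (((2:ℂ)^n)⁻¹ • z) (((2:ℂ)^n)⁻¹ • a)
          - D' v (((2:ℂ)^n)⁻¹ • z) (((2:ℂ)^n)⁻¹ • a))‖
          ≤ ‖u‖ * (K * (‖v‖^r * (ρ^n * ‖z‖^r) * (ρ^n * ‖a‖^r))) := by
        have h := hb' v (((2:ℂ)^n)⁻¹ • z) (((2:ℂ)^n)⁻¹ • a)
        rw [hsc n z, hsc n a] at h
        exact (norm_mul_le _ _).trans (mul_le_mul_of_nonneg_left h (norm_nonneg u))
      have hbig : ‖D' (u*v) (((2:ℂ)^n)⁻¹ • z) (((2:ℂ)^n)⁻¹ • a)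
          - D' u (((2:ℂ)^n)⁻¹ • z) (((2:ℂ)^n)⁻¹ • a) * v
          - u * D' v (((2:ℂ)^n)⁻¹ • z) (((2:ℂ)^n)⁻¹ • a)‖
          ≤ K * (‖u*v‖^r * (ρ^n * ‖z‖^r) * (ρ^n * ‖a‖^r))
            + θ * (1+‖v‖^r) * (ρ^n * ‖z‖^r) * (ρ^n * ‖a‖^r)
            + (K * (‖u‖^r * (ρ^n * ‖z‖^r) * (ρ^n * ‖a‖^r)) * ‖v‖
              + ‖u‖ * (K * (‖v‖^r * (ρ^n * ‖z‖^r) * (ρ^n * ‖a‖^r)))) := by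
        rw [heq]
        exact le_trans (norm_add_le _ _) (add_le_add
          (le_trans (norm_add_le _ _) (add_le_add hn1 hn2))
          (le_trans (norm_add_le _ _) (add_le_add hn3 hn4)))
      exact le_trans (mul_le_mul_of_nonneg_left
        (mul_le_mul_of_nonneg_left hbig (by positivity)) (by positivity))
        (le_of_eq (by ring))
    have hq20 : (0:ℝ) ≤ (2*ρ)^2 := by positivity
    have hq21 : (2*ρ)^2 < 1 := pow_lt_one₀ hq0 hq1 (by norm_num)
    have hlim := hgeo ((2*ρ)^2) ((K * ‖u*v‖^r + θ * (1+‖v‖^r) + K * ‖u‖^r * ‖v‖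
        + ‖u‖ * (K * ‖v‖^r)) * (‖z‖^r * ‖a‖^r)) hq20 hq21
    have hkey' : ∀ n : ℕ, ‖D' (u*v) z a - D' u z a * v - u * D' v z a‖
        ≤ ((K * ‖u*v‖^r + θ * (1+‖v‖^r) + K * ‖u‖^r * ‖v‖ + ‖u‖ * (K * ‖v‖^r))
            * (‖z‖^r * ‖a‖^r)) * ((2*ρ)^2)^n := by
      intro n
      have h := hkey n
      rwa [← pow_right_comm] at h
    have hle : ‖D' (u*v) z a - D' u z a * v - u * D' v z a‖ ≤ 0 :=
      le_of_tendsto_of_tendsto' tendsto_const_nhds hlim hkey'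
    have h0 := norm_le_zero_iff.mp hle
    have h1 : D' (u*v) z a - D' u z a * v - u * D' v z a = 0 := h0
    rw [sub_sub] at h1
    exact sub_eq_zero.mp h1
  -- extend the derivation property to all of A
  have hderiv : ∀ x v z w : A, D' (x*v) z w = D' x z w * v + x * D' v z w := by
    intro x v z w
    have hx := mem_span_unitary x
    induction hx using Submodule.span_induction with
    | mem u hu => exact hu1 u hu v z w
    | zero => simp [hD'0, zero_mul]
    | add p q hp hq ihp ihq =>
        rw [add_mul, hT'.1.1, ihp, ihq, hT'.1.1, add_mul, add_mul]
        abel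
    | smul c p hp ihp =>
        rw [smul_mul_assoc, hT'.2.1, ihp, hT'.2.1, smul_add, smul_mul_assoc, smul_mul_assoc]
  -- permutation invariance
  have hpermD : ∀ (σ : Equiv.Perm (Fin 3)) (xx : Fin 3 → A),
      D' (xx (σ 0)) (xx (σ 1)) (xx (σ 2)) = D' (xx 0) (xx 1) (xx 2) := by
    intro σ xx
    have hQ : ‖xx (σ 0)‖^r * ‖xx (σ 1)‖^r * ‖xx (σ 2)‖^r
        = ‖xx 0‖^r * ‖xx 1‖^r * ‖xx 2‖^r := by
      calc ‖xx (σ 0)‖^r * ‖xx (σ 1)‖^r * ‖xx (σ 2)‖^r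
          = ∏ i : Fin 3, ‖xx (σ i)‖^r := by rw [Fin.prod_univ_three]
      _ = ∏ i : Fin 3, ‖xx i‖^r := Equiv.prod_comp σ (fun i => ‖xx i‖^r)
      _ = ‖xx 0‖^r * ‖xx 1‖^r * ‖xx 2‖^r := by rw [Fin.prod_univ_three]
    have hkey : ∀ n : ℕ, ‖D' (xx (σ 0)) (xx (σ 1)) (xx (σ 2)) - D' (xx 0) (xx 1) (xx 2)‖
        ≤ ((2*K + θ) * (‖xx 0‖^r * ‖xx 1‖^r * ‖xx 2‖^r)) * ((2*ρ)^n)^3 := by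
      intro n
      have h1 := hresc3 n (xx (σ 0)) (xx (σ 1)) (xx (σ 2))
      have h2 := hresc3 n (xx 0) (xx 1) (xx 2)
      rw [h1, h2, ← smul_sub, ← smul_sub, ← smul_sub, hnormpow, hnormpow, hnormpow]
      have hp := hperm σ (fun i => ((2:ℂ)^n)⁻¹ • xx i)
      rw [hsc n (xx 0), hsc n (xx 1), hsc n (xx 2)] at hp
      have hp2 : ‖f (((2:ℂ)^n)⁻¹ • xx (σ 0)) (((2:ℂ)^n)⁻¹ • xx (σ 1)) (((2:ℂ)^n)⁻¹ • xx (σ 2))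
          - f (((2:ℂ)^n)⁻¹ • xx 0) (((2:ℂ)^n)⁻¹ • xx 1) (((2:ℂ)^n)⁻¹ • xx 2)‖
          ≤ θ * (ρ^n * ρ^n * ρ^n * (‖xx 0‖^r * ‖xx 1‖^r * ‖xx 2‖^r)) :=
        hp.trans (le_of_eq (by ring))
      have hbσ := hb' (((2:ℂ)^n)⁻¹ • xx (σ 0)) (((2:ℂ)^n)⁻¹ • xx (σ 1)) (((2:ℂ)^n)⁻¹ • xx (σ 2))
      rw [hsc n (xx (σ 0)), hsc n (xx (σ 1)), hsc n (xx (σ 2))] at hbσ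
      have hbσ2 : ‖f (((2:ℂ)^n)⁻¹ • xx (σ 0)) (((2:ℂ)^n)⁻¹ • xx (σ 1)) (((2:ℂ)^n)⁻¹ • xx (σ 2))
          - D' (((2:ℂ)^n)⁻¹ • xx (σ 0)) (((2:ℂ)^n)⁻¹ • xx (σ 1)) (((2:ℂ)^n)⁻¹ • xx (σ 2))‖
          ≤ K * (ρ^n * ρ^n * ρ^n * (‖xx 0‖^r * ‖xx 1‖^r * ‖xx 2‖^r)) :=
        hbσ.trans (le_of_eq (by rw [← hQ]; ring))
      have hb0 := hb' (((2:ℂ)^n)⁻¹ • xx 0) (((2:ℂ)^n)⁻¹ • xx 1) (((2:ℂ)^n)⁻¹ • xx 2)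
      rw [hsc n (xx 0), hsc n (xx 1), hsc n (xx 2)] at hb0
      have hb02 : ‖f (((2:ℂ)^n)⁻¹ • xx 0) (((2:ℂ)^n)⁻¹ • xx 1) (((2:ℂ)^n)⁻¹ • xx 2)
          - D' (((2:ℂ)^n)⁻¹ • xx 0) (((2:ℂ)^n)⁻¹ • xx 1) (((2:ℂ)^n)⁻¹ • xx 2)‖
          ≤ K * (ρ^n * ρ^n * ρ^n * (‖xx 0‖^r * ‖xx 1‖^r * ‖xx 2‖^r)) :=
        hb0.trans (le_of_eq (by ring))
      have etri : D' (((2:ℂ)^n)⁻¹ • xx (σ 0)) (((2:ℂ)^n)⁻¹ • xx (σ 1)) (((2:ℂ)^n)⁻¹ • xx (σ 2))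
          - D' (((2:ℂ)^n)⁻¹ • xx 0) (((2:ℂ)^n)⁻¹ • xx 1) (((2:ℂ)^n)⁻¹ • xx 2)
          = (f (((2:ℂ)^n)⁻¹ • xx (σ 0)) (((2:ℂ)^n)⁻¹ • xx (σ 1)) (((2:ℂ)^n)⁻¹ • xx (σ 2))
              - f (((2:ℂ)^n)⁻¹ • xx 0) (((2:ℂ)^n)⁻¹ • xx 1) (((2:ℂ)^n)⁻¹ • xx 2))
            + (f (((2:ℂ)^n)⁻¹ • xx 0) (((2:ℂ)^n)⁻¹ • xx 1) (((2:ℂ)^n)⁻¹ • xx 2)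
              - D' (((2:ℂ)^n)⁻¹ • xx 0) (((2:ℂ)^n)⁻¹ • xx 1) (((2:ℂ)^n)⁻¹ • xx 2))
            - (f (((2:ℂ)^n)⁻¹ • xx (σ 0)) (((2:ℂ)^n)⁻¹ • xx (σ 1)) (((2:ℂ)^n)⁻¹ • xx (σ 2))
              - D' (((2:ℂ)^n)⁻¹ • xx (σ 0)) (((2:ℂ)^n)⁻¹ • xx (σ 1)) (((2:ℂ)^n)⁻¹ • xx (σ 2))) := by
        abel
      have hinner : ‖D' (((2:ℂ)^n)⁻¹ • xx (σ 0)) (((2:ℂ)^n)⁻¹ • xx (σ 1)) (((2:ℂ)^n)⁻¹ • xx (σ 2))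
          - D' (((2:ℂ)^n)⁻¹ • xx 0) (((2:ℂ)^n)⁻¹ • xx 1) (((2:ℂ)^n)⁻¹ • xx 2)‖
          ≤ (θ + K + K) * (ρ^n * ρ^n * ρ^n * (‖xx 0‖^r * ‖xx 1‖^r * ‖xx 2‖^r)) := by
        rw [etri]
        refine le_trans (norm_sub_le _ _) (le_trans (add_le_add
          (le_trans (norm_add_le _ _) (add_le_add hp2 hb02)) hbσ2) (le_of_eq (by ring)))
      exact le_trans (mul_le_mul_of_nonneg_left (mul_le_mul_of_nonneg_left
        (mul_le_mul_of_nonneg_left hinner (by positivity)) (by positivity)) (by positivity))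
        (le_of_eq (by ring))
    have hq30 : (0:ℝ) ≤ (2*ρ)^3 := by positivity
    have hq31 : (2*ρ)^3 < 1 := pow_lt_one₀ hq0 hq1 (by norm_num)
    have hlim := hgeo ((2*ρ)^3) ((2*K + θ) * (‖xx 0‖^r * ‖xx 1‖^r * ‖xx 2‖^r)) hq30 hq31
    have hkey' : ∀ n : ℕ, ‖D' (xx (σ 0)) (xx (σ 1)) (xx (σ 2)) - D' (xx 0) (xx 1) (xx 2)‖
        ≤ ((2*K + θ) * (‖xx 0‖^r * ‖xx 1‖^r * ‖xx 2‖^r)) * ((2*ρ)^3)^n := by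
      intro n
      have h := hkey n
      rwa [← pow_right_comm] at h
    have hle : ‖D' (xx (σ 0)) (xx (σ 1)) (xx (σ 2)) - D' (xx 0) (xx 1) (xx 2)‖ ≤ 0 :=
      le_of_tendsto_of_tendsto' tendsto_const_nhds hlim hkey'
    exact sub_eq_zero.mp (norm_le_zero_iff.mp hle)
  exact ⟨hT', hderiv, hpermD⟩
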